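/- As λ → 0+ the value u(λ) increases monotonically and converges to u, where u is the smallest root of B_c(s) = 0 in [0,1]; in particular lim_{λ→0+} u(λ) = 1 when ∑_{j≥2} (j−1) b_j ≤ c·b_0, and lim_{λ→0+} u(λ) = u < 1 when ∑_{j≥2} (j−1) b_j > c·b_0 (the sums taken in [0,+∞]). -/

import Mathlib

open Set Filter Topology
open scoped ENNReal

/-- The generating function `B_i(s) = ∑_{j≥0} b_j s^j + (i-1) b_0 (1-s)`. -/
noncomputable def Bi (b : ℕ → ℝ) (i : ℕ) (s : ℝ) : ℝ :=
  (∑' j : ℕ, b j * s ^ j) + ((i : ℝ) - 1) * b 0 * (1 - s)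

section Aux
variable {b : ℕ → ℝ} {c : ℕ}

lemma aux_abs (hbnn : ∀ j : ℕ, j ≠ 1 → 0 ≤ b j) (hbsum : Summable b) :
    Summable fun j => |b j| := by
  refine (hbsum.update 1 |b 1|).congr fun j => ?_
  rcases eq_or_ne j 1 with rfl | hj
  · simp
  · rw [Function.update_of_ne hj, abs_of_nonneg (hbnn j hj)]

lemma aux_sumpow (habs : Summable fun j => |b j|) {s : ℝ} (hs0 : 0 ≤ s) (hs1 : s ≤ 1) :
    Summable fun j => b j * s ^ j := by
  refine Summable.of_norm_bounded habs fun j => ?_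
  rw [norm_mul, Real.norm_eq_abs, Real.norm_eq_abs, abs_of_nonneg (pow_nonneg hs0 _)]
  calc |b j| * s ^ j ≤ |b j| * 1 := by
        have := pow_le_one₀ hs0 hs1 (n := j)
        nlinarith [abs_nonneg (b j)]
    _ = |b j| := mul_one _

lemma aux_sumpow2 (habs : Summable fun j => |b j|) {s : ℝ} (hs0 : 0 ≤ s) (hs1 : s ≤ 1) :
    Summable fun j => b (j + 2) * s ^ (j + 2) := by
  have h := (aux_sumpow habs hs0 hs1).comp_injective (add_left_injective 2)
  exact h.congr fun j => rfl

lemma aux_split (habs : Summable fun j => |b j|) {s : ℝ} (hs0 : 0 ≤ s) (hs1 : s ≤ 1) :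
    (∑' j : ℕ, b j * s ^ j) = b 0 + b 1 * s + ∑' j : ℕ, b (j + 2) * s ^ (j + 2) := by
  have h0 := Summable.tsum_eq_zero_add (aux_sumpow habs hs0 hs1)
  have h1 : Summable fun j => b (j + 1) * s ^ (j + 1) := by
    have h := (aux_sumpow habs hs0 hs1).comp_injective (add_left_injective 1)
    exact h.congr fun j => rfl
  have h2 := Summable.tsum_eq_zero_add h1
  rw [h0, h2]
  have : ∀ j : ℕ, b (j + 1 + 1) * s ^ (j + 1 + 1) = b (j + 2) * s ^ (j + 2) := fun j => by norm_num
  rw [tsum_congr this]; ring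

variable {b : ℕ → ℝ} {c : ℕ}

-- continuity of tsum part on Icc 0 1
lemma aux_cont (habs : Summable fun j => |b j|) :
    ContinuousOn (fun s : ℝ => ∑' j : ℕ, b j * s ^ j) (Icc (0:ℝ) 1) := by
  rw [continuousOn_iff_continuous_restrict]
  have : (Icc (0:ℝ) 1).domRestrict (fun s : ℝ => ∑' j : ℕ, b j * s ^ j)
      = fun x : Icc (0:ℝ) 1 => ∑' j : ℕ, b j * (x:ℝ) ^ j := rfl
  rw [this]
  refine continuous_tsum (fun j => by continuity) habs fun j x => ?_
  rw [norm_mul, Real.norm_eq_abs, Real.norm_eq_abs, abs_of_nonneg (pow_nonneg x.2.1 _)]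
  have := pow_le_one₀ x.2.1 x.2.2 (n := j)
  nlinarith [abs_nonneg (b j)]


lemma aux_contBi (habs : Summable fun j => |b j|) :
    ContinuousOn (Bi b c) (Icc (0:ℝ) 1) := by
  unfold Bi
  exact (aux_cont habs).add (Continuous.continuousOn (by continuity))

lemma aux_Bi1 (hbzero : (∑' j : ℕ, b j) = 0) : Bi b c 1 = 0 := by
  simp [Bi, hbzero]

lemma aux_Bi0 : Bi b c 0 = (c : ℝ) * b 0 := by
  unfold Bi
  rw [tsum_eq_single 0 (fun j hj => by simp [zero_pow hj])]
  simp; ring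


lemma aux_psi (habs : Summable fun j => |b j|) {s : ℝ} (hs0 : 0 ≤ s) (hs1 : s ≤ 1) :
    Bi b c s - b 1 * s = (c:ℝ)*b 0 - ((c:ℝ)-1)*b 0*s + ∑' j : ℕ, b (j+2)*s^(j+2) := by
  unfold Bi; rw [aux_split habs hs0 hs1]; push_cast; ring

lemma aux_convex (hbnn : ∀ j : ℕ, j ≠ 1 → 0 ≤ b j) (habs : Summable fun j => |b j|)
    {x y t : ℝ} (hx : x ∈ Icc (0:ℝ) 1) (hy : y ∈ Icc (0:ℝ) 1) (ht0 : 0 ≤ t) (ht1 : t ≤ 1) :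
    Bi b c (t*x + (1-t)*y) - b 1 * (t*x + (1-t)*y) ≤
      t * (Bi b c x - b 1 * x) + (1-t) * (Bi b c y - b 1 * y) := by
  have hz0 : 0 ≤ t*x + (1-t)*y := by nlinarith [hx.1, hy.1]
  have hz1 : t*x + (1-t)*y ≤ 1 := by nlinarith [hx.2, hy.2]
  have hsx := aux_sumpow2 habs hx.1 hx.2
  have hsy := aux_sumpow2 habs hy.1 hy.2
  have hsz := aux_sumpow2 habs hz0 hz1
  have hP : (∑' j : ℕ, b (j+2) * (t*x + (1-t)*y)^(j+2))
      ≤ t * ∑' j : ℕ, b (j+2) * x^(j+2) + (1-t) * ∑' j : ℕ, b (j+2)*y^(j+2) := by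
    have hR : Summable (fun j : ℕ => t * (b (j+2) * x^(j+2)) + (1-t) * (b (j+2) * y^(j+2))) :=
      (hsx.mul_left t).add (hsy.mul_left (1-t))
    have h := Summable.tsum_le_tsum (f := fun j : ℕ => b (j+2) * (t*x + (1-t)*y)^(j+2))
      (g := fun j : ℕ => t * (b (j+2) * x^(j+2)) + (1-t) * (b (j+2)*y^(j+2))) ?_ hsz hR
    · rw [Summable.tsum_add (hsx.mul_left t) (hsy.mul_left (1-t)), tsum_mul_left, tsum_mul_left] at h
      exact h
    · intro j
      have hcv : (t*x + (1-t)*y)^(j+2) ≤ t * x^(j+2) + (1-t) * y^(j+2) :=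
        (convexOn_pow (j+2)).2 hx.1 hy.1 ht0 (by linarith) (by ring)
      have hb := hbnn (j+2) (by omega)
      show b (j+2) * (t*x + (1-t)*y)^(j+2) ≤ t * (b (j+2) * x^(j+2)) + (1-t) * (b (j+2)*y^(j+2))
      nlinarith [mul_le_mul_of_nonneg_left hcv hb]
  rw [aux_psi habs hz0 hz1, aux_psi habs hx.1 hx.2, aux_psi habs hy.1 hy.2]
  nlinarith [hP]


lemma aux_sign (hbnn : ∀ j : ℕ, j ≠ 1 → 0 ≤ b j) (habs : Summable fun j => |b j|)
    (hbzero : (∑' j : ℕ, b j) = 0)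
    {lam v : ℝ} (hlam : 0 < lam) (hv : v ∈ Ioo (0:ℝ) 1) (heq : Bi b c v = lam * v)
    {s : ℝ} (hs0 : 0 ≤ s) (hs1 : s ≤ 1) :
    (s < v → lam * s < Bi b c s) ∧ (v < s → Bi b c s < lam * s) := by
  have hBi1 : Bi b c 1 = 0 := aux_Bi1 hbzero
  have h1mem : (1:ℝ) ∈ Icc (0:ℝ) 1 := ⟨zero_le_one, le_refl 1⟩
  constructor
  · intro hsv
    have hsl1 : s < 1 := lt_of_lt_of_le hsv hv.2.le
    have h1s : 0 < 1 - s := by linarith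
    set t := (1-v)/(1-s) with ht_def
    have ht0 : 0 < t := div_pos (by linarith [hv.2]) h1s
    have ht1 : t < 1 := (div_lt_one h1s).2 (by linarith)
    have hcomb : t*s + (1-t)*1 = v := by
      rw [ht_def]; field_simp; ring
    have hkey := aux_convex (c := c) hbnn habs ⟨hs0, hs1⟩ h1mem ht0.le ht1.le
    rw [hcomb, heq, hBi1] at hkey
    -- hkey : lam*v - b1*v ≤ t*(Bi s - b1 s) + (1-t)*(0 - b1*1)
    have hv' : v = t*s + (1-t)*1 := hcomb.symm
    have h4 : lam * v = lam*(t*s) + lam*(1-t) := by rw [hv']; ring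
    have h5 : b 1 * v = b 1*(t*s) + b 1*(1-t) := by rw [hv']; ring
    have hpos : 0 < (1-t)*lam := mul_pos (by linarith) hlam
    nlinarith [hkey, h4, h5, hpos, ht0]
  · intro hvs
    rcases eq_or_lt_of_le hs1 with rfl | hsl1
    · rw [hBi1]; linarith
    have h1v : 0 < 1 - v := by linarith [hv.2]
    set t := (1-s)/(1-v) with ht_def
    have ht0 : 0 < t := div_pos (by linarith) h1v
    have ht1 : t < 1 := (div_lt_one h1v).2 (by linarith)
    have hcomb : t*v + (1-t)*1 = s := by
      rw [ht_def]; field_simp; ring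
    have hkey := aux_convex (c := c) hbnn habs ⟨hv.1.le, hv.2.le⟩ h1mem ht0.le ht1.le
    rw [hcomb, heq, hBi1] at hkey
    have hs' : s = t*v + (1-t)*1 := hcomb.symm
    have h4 : lam * s = lam*(t*v) + lam*(1-t) := by rw [hs']; ring
    have h5 : b 1 * s = b 1*(t*v) + b 1*(1-t) := by rw [hs']; ring
    have hpos : 0 < (1-t)*lam := mul_pos (by linarith) hlam
    linarith [hkey, h4, h5, hpos]


lemma aux_term {s : ℝ} (j : ℕ) :
    (1-s) * (∑ k ∈ Finset.range (j+1), s^(k+1)) = s - s^(j+2) := by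
  have hσ : (∑ k ∈ Finset.range (j+1), s^(k+1)) = s * ∑ k ∈ Finset.range (j+1), s^k := by
    rw [Finset.mul_sum]; exact Finset.sum_congr rfl fun k _ => by ring
  have hg := geom_sum_mul s (j+1)
  rw [hσ]; linear_combination (-s) * hg

lemma aux_sigma_nonneg {s : ℝ} (hs0 : 0 ≤ s) (j : ℕ) :
    0 ≤ ∑ k ∈ Finset.range (j+1), s^(k+1) :=
  Finset.sum_nonneg fun k _ => pow_nonneg hs0 _

lemma aux_Hsummable (habs : Summable fun j => |b j|) {s : ℝ} (hs0 : 0 ≤ s) (hs1 : s < 1) :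
    Summable fun j : ℕ => b (j+2) * ∑ k ∈ Finset.range (j+1), s^(k+1) := by
  have h1s : 0 < 1 - s := by linarith
  have habs2 : Summable fun j : ℕ => |b (j+2)| := by
    have h := (habs.comp_injective (add_left_injective 2))
    exact h.congr fun j => rfl
  refine Summable.of_norm_bounded (g := fun j => |b (j+2)| * (1/(1-s))) (habs2.mul_right _) fun j => ?_
  rw [norm_mul, Real.norm_eq_abs, Real.norm_eq_abs,
    abs_of_nonneg (aux_sigma_nonneg hs0 j)]
  refine mul_le_mul_of_nonneg_left ?_ (abs_nonneg _)
  rw [le_div_iff₀ h1s]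
  nlinarith [aux_term (s := s) j, pow_nonneg hs0 (j+2)]

lemma aux_b1 (hbsum : Summable b) (hbzero : (∑' j : ℕ, b j) = 0) :
    b 1 = -(b 0) - ∑' j : ℕ, b (j+2) := by
  have h0 := Summable.tsum_eq_zero_add hbsum
  have hs1 : Summable fun n : ℕ => b (n+1) := (summable_nat_add_iff 1).2 hbsum
  have h1 := Summable.tsum_eq_zero_add hs1
  have h2 : (∑' n : ℕ, b (n+1+1)) = ∑' n : ℕ, b (n+2) := tsum_congr fun n => by norm_num
  rw [h1, h2] at h0
  rw [h0] at hbzero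
  linarith

lemma aux_identity (hbnn : ∀ j : ℕ, j ≠ 1 → 0 ≤ b j) (habs : Summable fun j => |b j|)
    (hbsum : Summable b) (hbzero : (∑' j : ℕ, b j) = 0)
    {s : ℝ} (hs0 : 0 ≤ s) (hs1 : s < 1) :
    Bi b c s = (1-s) * ((c:ℝ) * b 0
      - ∑' j : ℕ, b (j+2) * ∑ k ∈ Finset.range (j+1), s^(k+1)) := by
  have hQ : Summable fun j : ℕ => b (j+2) := (summable_nat_add_iff 2).2 hbsum
  have hHs := aux_Hsummable habs hs0 hs1
  have hPH : (∑' j : ℕ, b (j+2) * s^(j+2))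
      = s * (∑' j : ℕ, b (j+2))
        - (1-s) * ∑' j : ℕ, b (j+2) * ∑ k ∈ Finset.range (j+1), s^(k+1) := by
    have h1 : (∑' j : ℕ, b (j+2) * s^(j+2))
        = ∑' j : ℕ, (s * b (j+2) - (1-s) * (b (j+2) * ∑ k ∈ Finset.range (j+1), s^(k+1))) :=
      tsum_congr fun j => by linear_combination (b (j+2)) * aux_term (s := s) j
    rw [h1, Summable.tsum_sub (hQ.mul_left s) (hHs.mul_left (1-s)), tsum_mul_left, tsum_mul_left]
  unfold Bi
  rw [aux_split habs hs0 hs1.le, hPH]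
  have hb1 := aux_b1 hbsum hbzero
  push_cast
  linear_combination s * hb1

end Aux

theorem stmt6 (c : ℕ) (hc : 1 ≤ c) (b : ℕ → ℝ)
    (hbnn : ∀ j : ℕ, j ≠ 1 → 0 ≤ b j) (hb0 : 0 < b 0)
    (hbsum : Summable b) (hbzero : (∑' j : ℕ, b j) = 0)
    (hb2 : 0 < ∑' j : ℕ, b (j + 2))
    (u : ℝ → ℝ)
    (hu : ∀ lam : ℝ, 0 < lam → u lam ∈ Set.Ioo (0 : ℝ) 1 ∧ Bi b c (u lam) = lam * u lam) :
    ∃ u₀ ∈ Set.Icc (0 : ℝ) 1, Bi b c u₀ = 0 ∧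
      (∀ s ∈ Set.Icc (0 : ℝ) 1, Bi b c s = 0 → u₀ ≤ s) ∧
      (∀ lam₁ lam₂ : ℝ, 0 < lam₁ → lam₁ < lam₂ → u lam₂ ≤ u lam₁) ∧
      Filter.Tendsto u (nhdsWithin 0 (Set.Ioi 0)) (nhds u₀) ∧
      ((∑' j : ℕ, ENNReal.ofReal (((j : ℝ) + 1) * b (j + 2))) ≤
          ENNReal.ofReal ((c : ℝ) * b 0) → u₀ = 1) ∧
      (ENNReal.ofReal ((c : ℝ) * b 0) <
          (∑' j : ℕ, ENNReal.ofReal (((j : ℝ) + 1) * b (j + 2))) → u₀ < 1) := by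
  have habs := aux_abs hbnn hbsum
  have hcont : ContinuousOn (Bi b c) (Icc (0:ℝ) 1) := aux_contBi habs
  have hBi0 : Bi b c 0 = (c:ℝ) * b 0 := aux_Bi0
  have hc1 : (1:ℝ) ≤ (c:ℝ) := by exact_mod_cast hc
  have hcb0 : 0 < (c:ℝ) * b 0 := mul_pos (by linarith) hb0
  have hg0 : ∀ j : ℕ, 0 ≤ ((j:ℝ)+1) * b (j+2) :=
    fun j => mul_nonneg (by positivity) (hbnn _ (by omega))
  set R : Set ℝ := Icc (0:ℝ) 1 ∩ (Bi b c) ⁻¹' {0} with hRdef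
  have hRclosed : IsClosed R :=
    hcont.preimage_isClosed_of_isClosed isClosed_Icc isClosed_singleton
  have hR1 : (1:ℝ) ∈ R := ⟨⟨zero_le_one, le_refl 1⟩, by
    simp only [mem_preimage, mem_singleton_iff]; exact aux_Bi1 hbzero⟩
  have hbdd : BddBelow R := ⟨0, fun x hx => hx.1.1⟩
  set u₀ := sInf R with hu₀
  have hmem : u₀ ∈ R := IsClosed.csInf_mem hRclosed ⟨1, hR1⟩ hbdd
  have hmemIcc : u₀ ∈ Icc (0:ℝ) 1 := hmem.1
  have hroot : Bi b c u₀ = 0 := hmem.2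
  have hmin : ∀ s ∈ Icc (0:ℝ) 1, Bi b c s = 0 → u₀ ≤ s := fun s hs h =>
    csInf_le hbdd ⟨hs, h⟩
  have hu0le1 : u₀ ≤ 1 := hmemIcc.2
  have hu0pos : 0 < u₀ := by
    rcases eq_or_lt_of_le hmemIcc.1 with h | h
    · exfalso; rw [← h, hBi0] at hroot; linarith
    · exact h
  have hpos : ∀ s, 0 ≤ s → s < u₀ → 0 < Bi b c s := by
    intro s h0 hlt
    by_contra hle; push_neg at hle
    have hs1 : s ≤ 1 := le_trans hlt.le hu0le1
    obtain ⟨r, hr, hr0⟩ := intermediate_value_Icc' h0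
      (hcont.mono (Icc_subset_Icc le_rfl hs1)) ⟨hle, by rw [hBi0]; exact hcb0.le⟩
    have := hmin r ⟨hr.1, le_trans hr.2 hs1⟩ hr0
    linarith [hr.2]
  have hult : ∀ lam, 0 < lam → u lam < u₀ := by
    intro lam hlam
    obtain ⟨hui, hue⟩ := hu lam hlam
    by_contra h; push_neg at h
    rcases eq_or_lt_of_le h with heq2 | hlt2
    · rw [← heq2, hroot] at hue; nlinarith [hu0pos]
    · have := (aux_sign hbnn habs hbzero hlam hui hue hmemIcc.1 hu0le1).1 hlt2
      rw [hroot] at this; nlinarith [hu0pos]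
  refine ⟨u₀, hmemIcc, hroot, hmin, ?_, ?_, ?_, ?_⟩
  · -- antitone
    intro l1 l2 h1 h12
    obtain ⟨hui1, hue1⟩ := hu l1 h1
    obtain ⟨hui2, hue2⟩ := hu l2 (h1.trans h12)
    by_contra h; push_neg at h
    have hsg := (aux_sign hbnn habs hbzero h1 hui1 hue1 hui2.1.le hui2.2.le).2 h
    rw [hue2] at hsg
    nlinarith [hui2.1]
  · -- tendsto
    rw [tendsto_order]
    constructor
    · intro a ha
      rcases lt_or_ge a 0 with ha0 | ha0
      · filter_upwards [self_mem_nhdsWithin] with lam hlam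
        exact lt_trans ha0 (hu lam hlam).1.1
      · have haIcc : a ∈ Icc (0:ℝ) 1 := ⟨ha0, le_trans ha.le hu0le1⟩
        have hBa : 0 < Bi b c a := hpos a ha0 ha
        filter_upwards [Ioo_mem_nhdsGT_of_mem
          (⟨le_refl (0:ℝ), hBa⟩ : (0:ℝ) ∈ Ico (0:ℝ) (Bi b c a))] with lam hlam
        obtain ⟨hui, hue⟩ := hu lam hlam.1
        by_contra h; push_neg at h
        rcases eq_or_lt_of_le h with heq2 | hlt2
        · rw [heq2] at hue; nlinarith [hlam.1, hlam.2, haIcc.2]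
        · have := (aux_sign hbnn habs hbzero hlam.1 hui hue haIcc.1 haIcc.2).2 hlt2
          nlinarith [hlam.1, hlam.2, haIcc.2, ha0]
    · intro a ha
      filter_upwards [self_mem_nhdsWithin] with lam hlam
      exact lt_trans (hult lam hlam) ha
  · -- subcritical : u₀ = 1
    intro hle
    by_contra hne
    have hu01 : u₀ < 1 := lt_of_le_of_ne hu0le1 hne
    have hne_top : (∑' j : ℕ, ENNReal.ofReal (((j:ℝ)+1) * b (j+2))) ≠ ⊤ :=
      ne_top_of_le_ne_top ENNReal.ofReal_ne_top hle
    have hgsum : Summable fun j : ℕ => ((j:ℝ)+1) * b (j+2) :=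
      (ENNReal.summable_toReal hne_top).congr fun j => ENNReal.toReal_ofReal (hg0 j)
    have hgle : (∑' j : ℕ, ((j:ℝ)+1) * b (j+2)) ≤ (c:ℝ) * b 0 := by
      have h1 := ENNReal.toReal_mono ENNReal.ofReal_ne_top hle
      rw [ENNReal.tsum_toReal_eq (fun j => ENNReal.ofReal_ne_top),
        ENNReal.toReal_ofReal hcb0.le] at h1
      calc (∑' j : ℕ, ((j:ℝ)+1) * b (j+2))
          = ∑' j : ℕ, (ENNReal.ofReal (((j:ℝ)+1) * b (j+2))).toReal :=
            tsum_congr fun j => (ENNReal.toReal_ofReal (hg0 j)).symm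
        _ ≤ (c:ℝ) * b 0 := h1
    have hHle : (∑' j : ℕ, b (j+2) * ∑ k ∈ Finset.range (j+1), u₀^(k+1))
        ≤ u₀ * ∑' j : ℕ, ((j:ℝ)+1) * b (j+2) := by
      rw [← tsum_mul_left]
      refine Summable.tsum_le_tsum (fun j => ?_) (aux_Hsummable habs hmemIcc.1 hu01)
        (hgsum.mul_left u₀)
      have hσ : (∑ k ∈ Finset.range (j+1), u₀^(k+1)) ≤ ((j:ℝ)+1) * u₀ := by
        calc (∑ k ∈ Finset.range (j+1), u₀^(k+1))
            ≤ (Finset.range (j+1)).card • u₀ :=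
              Finset.sum_le_card_nsmul _ _ _ (fun k _ => by
                calc u₀^(k+1) ≤ u₀^1 := pow_le_pow_of_le_one hmemIcc.1 hu0le1 (by omega)
                  _ = u₀ := pow_one u₀)
          _ = ((j:ℝ)+1) * u₀ := by
              rw [Finset.card_range, nsmul_eq_mul]; push_cast; ring
      have hb := hbnn (j+2) (by omega)
      calc b (j+2) * ∑ k ∈ Finset.range (j+1), u₀^(k+1)
          ≤ b (j+2) * (((j:ℝ)+1) * u₀) := mul_le_mul_of_nonneg_left hσ hb
        _ = u₀ * (((j:ℝ)+1) * b (j+2)) := by ring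
    have hH_lt : (∑' j : ℕ, b (j+2) * ∑ k ∈ Finset.range (j+1), u₀^(k+1))
        < (c:ℝ) * b 0 := by
      have hgnn : (0:ℝ) ≤ ∑' j : ℕ, ((j:ℝ)+1) * b (j+2) :=
        tsum_nonneg fun j => hg0 j
      nlinarith [hHle, hgle, hu01, hu0pos, hcb0]
    have hcontr : (0:ℝ) < Bi b c u₀ := by
      rw [aux_identity hbnn habs hbsum hbzero hmemIcc.1 hu01]
      exact mul_pos (by linarith) (by linarith)
    rw [hroot] at hcontr; exact lt_irrefl 0 hcontr
  · -- supercritical : u₀ < 1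
    intro hlt
    rw [ENNReal.tsum_eq_iSup_sum, lt_iSup_iff] at hlt
    obtain ⟨F, hF⟩ := hlt
    rw [← ENNReal.ofReal_sum_of_nonneg (fun j _ => hg0 j)] at hF
    have hFreal : (c:ℝ) * b 0 < ∑ j ∈ F, ((j:ℝ)+1) * b (j+2) :=
      (ENNReal.ofReal_lt_ofReal_iff_of_nonneg hcb0.le).1 hF
    set G : ℝ → ℝ := fun s => ∑ j ∈ F, b (j+2) * ∑ k ∈ Finset.range (j+1), s^(k+1)
      with hGdef
    have hGcont : Continuous G := by
      apply continuous_finset_sum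
      intro j _
      exact continuous_const.mul (continuous_finset_sum _ fun k _ => by continuity)
    have hG1 : G 1 = ∑ j ∈ F, ((j:ℝ)+1) * b (j+2) := by
      rw [hGdef]
      refine Finset.sum_congr rfl fun j _ => ?_
      rw [Finset.sum_congr rfl (fun k _ => one_pow (k+1)), Finset.sum_const,
        Finset.card_range, nsmul_eq_mul]
      push_cast; ring
    have hopen : {s : ℝ | (c:ℝ) * b 0 < G s} ∈ 𝓝 (1:ℝ) :=
      (isOpen_lt continuous_const hGcont).mem_nhds (by rw [mem_setOf_eq, hG1]; exact hFreal)
    have hmeet : ({s : ℝ | (c:ℝ) * b 0 < G s} ∩ Ioo 0 1).Nonempty := by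
      refine Filter.nonempty_of_mem (Filter.inter_mem ?_ ?_ :
        {s : ℝ | (c:ℝ) * b 0 < G s} ∩ Ioo 0 1 ∈ 𝓝[<] (1:ℝ))
      · exact mem_nhdsWithin_of_mem_nhds hopen
      · exact Ioo_mem_nhdsLT_of_mem ⟨zero_lt_one, le_refl 1⟩
    obtain ⟨s, hsG, hs01⟩ := hmeet
    have hHge : G s ≤ ∑' j : ℕ, b (j+2) * ∑ k ∈ Finset.range (j+1), s^(k+1) :=
      Summable.sum_le_tsum F (fun j _ => mul_nonneg (hbnn _ (by omega))
        (aux_sigma_nonneg hs01.1.le j)) (aux_Hsummable habs hs01.1.le hs01.2)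
    have hBineg : Bi b c s < 0 := by
      rw [aux_identity hbnn habs hbsum hbzero hs01.1.le hs01.2]
      have h1 : (0:ℝ) < 1 - s := by linarith [hs01.2]
      have h2 : (c:ℝ) * b 0 - (∑' j : ℕ, b (j+2) * ∑ k ∈ Finset.range (j+1), s^(k+1)) < 0 := by
        rw [mem_setOf_eq] at hsG; linarith
      exact mul_neg_of_pos_of_neg h1 h2
    obtain ⟨r, hr, hr0⟩ := intermediate_value_Icc' hs01.1.le
      (hcont.mono (Icc_subset_Icc le_rfl hs01.2.le)) ⟨hBineg.le, by rw [hBi0]; exact hcb0.le⟩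
    have hur := hmin r ⟨hr.1, hr.2.trans hs01.2.le⟩ hr0
    exact lt_of_le_of_lt hur (lt_of_le_of_lt hr.2 hs01.2)
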